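/- Assume τ₂ > 0 and k > 0. Then the matrix M is positive definite: Σ_{a,b=1}^4 M_{ab} g_a g_b > 0 for every nonzero g ∈ ℝ⁴. Moreover, for every nonzero integer vector g ∈ ℤ⁴ one has Σ_{a,b=1}^4 M_{ab} g_a g_b ≥ min(k, τ₂, 1/τ₂, 1/k). (Paper appendix D: the boundary Hodge norm at the conifold is a genuine norm, and nonzero quantized fluxes have boundary Hodge norm bounded below by an explicit constant λ, as in eq. (6.6).) -/

import Mathlib

lemma int_sq_ge_one {z : ℤ} (h : z ≠ 0) : (1:ℝ) ≤ (z:ℝ)^2 := by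
  have h1 : (1:ℤ) ≤ z^2 := by nlinarith [Int.one_le_abs h, sq_abs z, abs_nonneg z]
  exact_mod_cast h1
/-- The boundary Hodge norm at a Type I₁ (conifold) degeneration is positive definite,
and nonzero quantized (integer) fluxes have boundary Hodge norm bounded below by the
explicit constant `min(k, τ₂, τ₂⁻¹, k⁻¹)`. -/
theorem conifold_boundary_hodge_norm_posdef_and_gap
    (τ₁ τ₂ γ δ k : ℝ) (hτ : 0 < τ₂) (hk : 0 < k)
    (M : Matrix (Fin 4) (Fin 4) ℝ)
    (hM : M = !![(τ₁ ^ 2 + τ₂ ^ 2) / τ₂ + δ ^ 2 / k,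
                   (δ * τ₁ - γ * (τ₁ ^ 2 + τ₂ ^ 2)) / τ₂,
                   -δ / k,
                   -τ₁ / τ₂ - γ * δ / k;
                 (δ * τ₁ - γ * (τ₁ ^ 2 + τ₂ ^ 2)) / τ₂,
                   (γ ^ 2 * (τ₁ ^ 2 + τ₂ ^ 2) + δ ^ 2 + k * τ₂ - 2 * γ * δ * τ₁) / τ₂,
                   0,
                   (γ * τ₁ - δ) / τ₂;
                 -δ / k, 0, 1 / k, γ / k;
                 -τ₁ / τ₂ - γ * δ / k, (γ * τ₁ - δ) / τ₂, γ / k, 1 / τ₂ + γ ^ 2 / k]) :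
    (∀ g : Fin 4 → ℝ, g ≠ 0 → 0 < ∑ a : Fin 4, ∑ b : Fin 4, M a b * g a * g b) ∧
    (∀ g : Fin 4 → ℤ, g ≠ 0 →
      min k (min τ₂ (min τ₂⁻¹ k⁻¹))
        ≤ ∑ a : Fin 4, ∑ b : Fin 4, M a b * (g a : ℝ) * (g b : ℝ)) := by
  have hτ' : τ₂ ≠ 0 := hτ.ne'
  have hk' : k ≠ 0 := hk.ne'
  have key : ∀ x : Fin 4 → ℝ, ∑ a : Fin 4, ∑ b : Fin 4, M a b * x a * x b =
      k * (x 1)^2 + τ₂ * (x 0 - γ * x 1)^2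
      + τ₂⁻¹ * (x 3 + (γ * τ₁ - δ) * x 1 - τ₁ * x 0)^2
      + k⁻¹ * (x 2 + γ * x 3 - δ * x 0)^2 := by
    intro x
    subst hM
    simp only [Fin.sum_univ_four, Matrix.of_apply, Matrix.cons_val', Matrix.cons_val_zero, Matrix.cons_val_one,
      Matrix.head_cons, Matrix.empty_val', Matrix.cons_val_fin_one, Matrix.head_fin_const,
      Matrix.cons_val_two, Matrix.tail_cons, Matrix.cons_val_three]
    field_simp
    ring
  have nn : ∀ x : Fin 4 → ℝ,
      0 ≤ k * (x 1)^2 ∧ 0 ≤ τ₂ * (x 0 - γ * x 1)^2 ∧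
      0 ≤ τ₂⁻¹ * (x 3 + (γ * τ₁ - δ) * x 1 - τ₁ * x 0)^2 ∧
      0 ≤ k⁻¹ * (x 2 + γ * x 3 - δ * x 0)^2 := by
    intro x
    refine ⟨mul_nonneg hk.le (sq_nonneg _), mul_nonneg hτ.le (sq_nonneg _),
      mul_nonneg (inv_nonneg.mpr hτ.le) (sq_nonneg _),
      mul_nonneg (inv_nonneg.mpr hk.le) (sq_nonneg _)⟩
  constructor
  · intro g hg
    rw [key g]
    obtain ⟨n1, n2, n3, n4⟩ := nn g
    by_contra h
    push_neg at h
    have e1 : g 1 = 0 := by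
      have hs : (g 1)^2 ≤ 0 :=
        le_of_mul_le_mul_left (by linarith : k * (g 1)^2 ≤ k * 0) hk
      have := le_antisymm hs (sq_nonneg _)
      exact sq_eq_zero_iff.mp this
    have e2 : g 0 = 0 := by
      have hs : (g 0 - γ * g 1)^2 ≤ 0 :=
        le_of_mul_le_mul_left (by linarith : τ₂ * (g 0 - γ * g 1)^2 ≤ τ₂ * 0) hτ
      have := sq_eq_zero_iff.mp (le_antisymm hs (sq_nonneg _))
      rw [e1] at this; linarith
    have e3 : g 3 = 0 := by
      have hs : (g 3 + (γ * τ₁ - δ) * g 1 - τ₁ * g 0)^2 ≤ 0 :=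
        le_of_mul_le_mul_left
          (by linarith : τ₂⁻¹ * (g 3 + (γ * τ₁ - δ) * g 1 - τ₁ * g 0)^2 ≤ τ₂⁻¹ * 0)
          (inv_pos.mpr hτ)
      have := sq_eq_zero_iff.mp (le_antisymm hs (sq_nonneg _))
      rw [e1, e2] at this; linarith
    have e4 : g 2 = 0 := by
      have hs : (g 2 + γ * g 3 - δ * g 0)^2 ≤ 0 :=
        le_of_mul_le_mul_left (by linarith : k⁻¹ * (g 2 + γ * g 3 - δ * g 0)^2 ≤ k⁻¹ * 0)
          (inv_pos.mpr hk)
      have := sq_eq_zero_iff.mp (le_antisymm hs (sq_nonneg _))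
      rw [e3, e2] at this; linarith
    exact hg (funext fun i => by fin_cases i <;> assumption)
  · intro g hg
    set x : Fin 4 → ℝ := fun a => (g a : ℝ) with hx
    rw [key x]
    obtain ⟨n1, n2, n3, n4⟩ := nn x
    have hmk : min k (min τ₂ (min τ₂⁻¹ k⁻¹)) ≤ k := min_le_left _ _
    have hmt : min k (min τ₂ (min τ₂⁻¹ k⁻¹)) ≤ τ₂ :=
      le_trans (min_le_right _ _) (min_le_left _ _)
    have hmt' : min k (min τ₂ (min τ₂⁻¹ k⁻¹)) ≤ τ₂⁻¹ :=
      le_trans (min_le_right _ _) (le_trans (min_le_right _ _) (min_le_left _ _))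
    have hmk' : min k (min τ₂ (min τ₂⁻¹ k⁻¹)) ≤ k⁻¹ :=
      le_trans (min_le_right _ _) (le_trans (min_le_right _ _) (min_le_right _ _))
    rcases eq_or_ne (g 1) 0 with h1 | h1
    · rcases eq_or_ne (g 0) 0 with h0 | h0
      · rcases eq_or_ne (g 3) 0 with h3 | h3
        · have h2 : g 2 ≠ 0 := by
            intro h2; exact hg (funext fun i => by fin_cases i <;> assumption)
          have hs : (1:ℝ) ≤ (x 2 + γ * x 3 - δ * x 0)^2 := by
            simp only [hx, h0, h3, Int.cast_zero]
            simpa using int_sq_ge_one h2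
          have : k⁻¹ ≤ k⁻¹ * (x 2 + γ * x 3 - δ * x 0)^2 :=
            le_mul_of_one_le_right (inv_nonneg.mpr hk.le) hs
          linarith
        · have hs : (1:ℝ) ≤ (x 3 + (γ * τ₁ - δ) * x 1 - τ₁ * x 0)^2 := by
            simp only [hx, h0, h1, Int.cast_zero]
            simpa using int_sq_ge_one h3
          have : τ₂⁻¹ ≤ τ₂⁻¹ * (x 3 + (γ * τ₁ - δ) * x 1 - τ₁ * x 0)^2 :=
            le_mul_of_one_le_right (inv_nonneg.mpr hτ.le) hs
          linarith
      · have hs : (1:ℝ) ≤ (x 0 - γ * x 1)^2 := by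
          simp only [hx, h1, Int.cast_zero]
          simpa using int_sq_ge_one h0
        have : τ₂ ≤ τ₂ * (x 0 - γ * x 1)^2 := le_mul_of_one_le_right hτ.le hs
        linarith
    · have hs : (1:ℝ) ≤ (x 1)^2 := int_sq_ge_one h1
      have : k ≤ k * (x 1)^2 := le_mul_of_one_le_right hk.le hs
      linarith
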